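/- Let 0 < q < 1, let n ≥ 2 and k ≥ 0 be integers, let μ ∈ Par_n be a partition, and let f(x_1,…,x_{n−1}) be a polynomial that is homogeneous of degree d. Then ∫_{0≤x_1≤⋯≤x_n≤1} x_n^k f(x_1,…,x_{n−1}) a_{μ+δ_n}(x_1,…,x_n) d_q x_1 ⋯ d_q x_n = ((1−q)/(1 − q^{|μ|+C(n+1,2)+k+d})) · ∑_{ℓ=1}^n (−1)^{n−ℓ} ∫_{0≤x_1≤⋯≤x_{n−1}≤1} f(x_1,…,x_{n−1}) a_{μ̂^{(ℓ)}+δ_{n−1}}(x_1,…,x_{n−1}) d_q x_1 ⋯ d_q x_{n−1}, where C(n+1,2) = n(n+1)/2 is the binomial coefficient. -/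

import Mathlib

/-- The `q`-integral over the simplex `0 ≤ x_1 ≤ ⋯ ≤ x_n ≤ 1`:
`∫ f d_q x = (1-q)^n ∑_{μ ∈ Par_n} q^{|μ|} f(q^{μ_1},…,q^{μ_n})`,
the sum over all partitions `μ` with at most `n` parts. -/
noncomputable def qint (q : ℝ) (n : ℕ) (f : (Fin n → ℝ) → ℝ) : ℝ :=
  (1 - q) ^ n *
    ∑' μ : {μ : Fin n → ℕ // Antitone μ}, q ^ (∑ i, μ.1 i) * f (fun i => q ^ (μ.1 i))

/-- The alternant `a_λ(x_1,…,x_n) = det(x_i^{λ_j})`. -/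
noncomputable def alt (n : ℕ) (lam : Fin n → ℕ) (x : Fin n → ℝ) : ℝ :=
  Matrix.det (Matrix.of fun i j : Fin n => x i ^ lam j)

/-- `λ + δ_n`, where `δ_n = (n-1, n-2, …, 1, 0)` is the staircase. -/
def stair (n : ℕ) (lam : Fin n → ℕ) : Fin n → ℕ :=
  fun j => lam j + (n - 1 - (j : ℕ))

/-- q-Pochhammer symbol `(a;q)_m = ∏_{i=0}^{m-1} (1 - a q^i)`. -/
noncomputable def qpoch (a q : ℝ) (m : ℕ) : ℝ :=
  ∏ i ∈ Finset.range m, (1 - a * q ^ i)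

/-- Parts of a partition `μ ∈ Par_n`, extended by `0` beyond index `n`
(`padF μ t` is the part `μ_{t+1}` in 1-based labelling). -/
def padF {n : ℕ} (μ : Fin n → ℕ) : ℕ → ℕ := fun t => if h : t < n then μ ⟨t, h⟩ else 0

/-- The partition `μ̂^{(ℓ)} ∈ Par_{n-1}` obtained from `μ ∈ Par_n`:
`μ̂^{(ℓ)}_i = μ_i + 1` for `i < ℓ` and `μ̂^{(ℓ)}_i = μ_{i+1}` for `i ≥ ℓ`
(here `ℓ : Fin n` encodes the 1-based index `ℓ+1`). -/
def muhat (n : ℕ) (μ : Fin n → ℕ) (ℓ : Fin n) : Fin (n - 1) → ℕ :=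
  fun i =>
    if (i : ℕ) < (ℓ : ℕ) then μ ⟨(i : ℕ), by have := i.isLt; omega⟩ + 1
    else μ ⟨(i : ℕ) + 1, by have := i.isLt; omega⟩

lemma continuous_alt (m : ℕ) (lam : Fin m → ℕ) : Continuous (alt m lam) := by
  apply Continuous.matrix_det
  apply continuous_matrix
  intro i j
  exact (continuous_apply i).pow _

lemma alt_smul (m : ℕ) (lam : Fin m → ℕ) (t : ℝ) (x : Fin m → ℝ) :
    alt m lam (fun i => t * x i) = t ^ (∑ j, lam j) * alt m lam x := by
  unfold alt
  have h : (Matrix.of fun i j : Fin m => (t * x i) ^ lam j)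
      = Matrix.of fun i j : Fin m => (t ^ lam j) * ((Matrix.of fun i j : Fin m => x i ^ lam j) i j) := by
    ext i j
    simp [mul_pow]
  rw [h, Matrix.det_mul_row, Finset.prod_pow_eq_pow_sum]

lemma summable_qpow (q : ℝ) (hq0 : 0 ≤ q) (hq1 : q < 1) :
    ∀ m : ℕ, Summable (fun ν : (Fin m → ℕ) => q ^ (∑ i, ν i))
  | 0 => by
      exact .of_finite
  | (m+1) => by
      have h1 := summable_qpow q hq0 hq1 m
      have h2 : Summable (fun c : ℕ => q ^ c) := summable_geometric_of_lt_one hq0 hq1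
      have h3 := h2.mul_of_nonneg h1 (fun c => pow_nonneg hq0 c) (fun ν => pow_nonneg hq0 _)
      refine ((Fin.consEquiv fun _ => ℕ).symm.summable_iff.mpr h3).congr (fun ν => ?_)
      simp only [Function.comp, Fin.consEquiv_symm_apply]
      rw [Fin.sum_univ_succ, pow_add]; rfl

lemma summable_abs_main (q : ℝ) (hq0 : 0 < q) (hq1 : q < 1) (m : ℕ) {g : (Fin m → ℝ) → ℝ}
    (hg : Continuous g) :
    Summable (fun ν : {ν : Fin m → ℕ // Antitone ν} =>
      |q ^ (∑ i, ν.1 i) * g (fun i => q ^ ν.1 i)|) := by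
  obtain ⟨C, hC⟩ := (isCompact_Icc (a := (0 : Fin m → ℝ)) (b := 1)).exists_bound_of_continuousOn
    hg.continuousOn
  have hmem : ∀ ν : Fin m → ℕ, (fun i => q ^ ν i) ∈ Set.Icc (0 : Fin m → ℝ) 1 := by
    intro ν
    constructor
    · intro i; positivity
    · intro i; exact pow_le_one₀ hq0.le hq1.le
  have hsum : Summable (fun ν : {ν : Fin m → ℕ // Antitone ν} => q ^ (∑ i, ν.1 i)) :=
    (summable_qpow q hq0.le hq1 m).comp_injective Subtype.val_injective
  apply Summable.of_nonneg_of_le (fun ν => abs_nonneg _) ?_ (hsum.mul_right C)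
  intro ν
  rw [abs_mul, abs_pow, abs_of_pos hq0]
  exact mul_le_mul_of_nonneg_left
    (((Real.norm_eq_abs _).symm.trans_le (hC _ (hmem ν.1)))) (pow_nonneg hq0.le _)

def parEquiv (m : ℕ) : ℕ × {ν : Fin m → ℕ // Antitone ν} ≃ {π : Fin (m+1) → ℕ // Antitone π} where
  toFun p := ⟨Fin.snoc (fun i => p.2.1 i + p.1) p.1, by
    intro i j hij
    induction j using Fin.lastCases with
    | last =>
      induction i using Fin.lastCases with
      | last => exact le_rfl
      | cast i' =>
        rw [Fin.snoc_last, Fin.snoc_castSucc]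
        exact Nat.le_add_left _ _
    | cast j' =>
      induction i using Fin.lastCases with
      | last => exact absurd hij (by simp [Fin.le_def])
      | cast i' =>
        rw [Fin.snoc_castSucc, Fin.snoc_castSucc]
        exact Nat.add_le_add_right (p.2.2 (Fin.castSucc_le_castSucc_iff.mp hij)) _⟩
  invFun π := ⟨π.1 (Fin.last m), ⟨fun i => π.1 i.castSucc - π.1 (Fin.last m), by
    intro i j hij
    exact Nat.sub_le_sub_right (π.2 (Fin.castSucc_le_castSucc_iff.mpr hij)) _⟩⟩
  left_inv p := by
    obtain ⟨c, ν, hν⟩ := p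
    refine Prod.ext ?_ (Subtype.ext (funext fun i => ?_))
    · simp
    · simp
  right_inv π := by
    obtain ⟨π, hπ⟩ := π
    refine Subtype.ext (funext fun i => ?_)
    induction i using Fin.lastCases with
    | last => simp [Fin.snoc_last]
    | cast i' =>
      simp only [Fin.snoc_castSucc]
      have : π (Fin.last m) ≤ π i'.castSucc := hπ (Fin.le_last _)
      omega

lemma stair_succAbove (m : ℕ) (κ : Fin (m+1) → ℕ) (j : Fin (m+1)) (j' : Fin m) :
    stair (m+1) κ (j.succAbove j') = stair m (muhat (m+1) κ j) j' := by
  have hj' := j'.isLt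
  unfold stair muhat
  rcases Nat.lt_or_ge (j' : ℕ) (j : ℕ) with h | h
  · rw [Fin.succAbove_of_castSucc_lt _ _ (by simpa [Fin.lt_def] using h), if_pos h]
    have he : j'.castSucc = (⟨(j' : ℕ), by omega⟩ : Fin (m+1)) := rfl
    rw [he]
    simp only [Fin.val_mk]
    omega
  · rw [Fin.succAbove_of_le_castSucc _ _ (by simpa [Fin.le_def] using h), if_neg (by omega)]
    have he : j'.succ = (⟨(j' : ℕ) + 1, by omega⟩ : Fin (m+1)) := rfl
    rw [he]
    simp only [Fin.val_mk]
    omega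

lemma alt_snoc_one (m : ℕ) (κ : Fin (m+1) → ℕ) (y : Fin m → ℝ) :
    alt (m+1) (stair (m+1) κ) (Fin.snoc y 1)
      = ∑ j : Fin (m+1), (-1:ℝ)^(m - (j:ℕ)) * alt m (stair m (muhat (m+1) κ j)) y := by
  unfold alt
  rw [Matrix.det_succ_row _ (Fin.last m)]
  refine Finset.sum_congr rfl fun j _ => ?_
  simp only [Matrix.of_apply, Fin.snoc_last, one_pow, mul_one]
  congr 1
  · have hj := j.isLt
    have h2 : ((Fin.last m : Fin (m+1)) : ℕ) + (j : ℕ) = (m - (j : ℕ)) + 2 * (j : ℕ) := by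
      simp only [Fin.val_last]; omega
    rw [h2, pow_add, pow_mul]
    norm_num
  · congr 1
    ext i' j'
    simp only [Matrix.submatrix_apply, Fin.succAbove_last, Matrix.of_apply, Fin.snoc_castSucc]
    rw [stair_succAbove]

lemma sum_stair (m : ℕ) (κ : Fin (m+1) → ℕ) :
    (m + 1) + ∑ j : Fin (m+1), stair (m+1) κ j = (∑ j, κ j) + (m+2).choose 2 := by
  unfold stair
  rw [Finset.sum_add_distrib]
  have h1 : ∑ j : Fin (m+1), (m + 1 - 1 - (j:ℕ)) = ∑ j ∈ Finset.range (m+1), (m - j) := by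
    rw [Fin.sum_univ_eq_sum_range]
    rfl
  have h2 : ∑ j ∈ Finset.range (m+1), (m - j) = ∑ j ∈ Finset.range (m+1), j := by
    simpa using Finset.sum_range_reflect (fun j => j) (m+1)
  have h3 := Finset.sum_range_id_mul_two (m+1)
  have h4 : (m+2).choose 2 * 2 = (m+2) * (m+1) := by
    rw [Nat.choose_two_right]
    refine Nat.div_mul_cancel ?_
    have : Even ((m+1) * (m+2)) := Nat.even_mul_succ_self (m+1)
    rw [mul_comm] at this
    exact this.two_dvd
  have hring : (m+2)*(m+1) = 2*(m+1) + (m+1) * m := by ring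
  rw [h1, h2]
  simp only [Nat.add_sub_cancel] at h3
  generalize hA : (m+1) * m = A at h3 hring
  generalize hB : (m+2) * (m+1) = B at h4 hring
  omega

lemma continuous_snoc (m : ℕ) : Continuous fun y : Fin m → ℝ => (Fin.snoc y (1:ℝ) : Fin (m+1) → ℝ) := by
  refine continuous_pi fun i => ?_
  induction i using Fin.lastCases with
  | last => simpa [Fin.snoc_last] using continuous_const
  | cast i' => simpa [Fin.snoc_castSucc] using continuous_apply i'

open MvPolynomial in
lemma key_point (q : ℝ) (m k d : ℕ) (μ : Fin (m+1) → ℕ)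
    (f : MvPolynomial (Fin m) ℝ)
    (hf : ∀ (t : ℝ) (x : Fin m → ℝ),
      MvPolynomial.eval (fun i => t * x i) f = t ^ d * MvPolynomial.eval x f)
    (c : ℕ) (ν : Fin m → ℕ) :
    q ^ (∑ i : Fin (m+1), Fin.snoc (fun i => ν i + c) c i) *
      ((q ^ ((Fin.snoc (fun i => ν i + c) c : Fin (m+1) → ℕ) (Fin.last m))) ^ k *
        MvPolynomial.eval (fun i : Fin m => q ^ ((Fin.snoc (fun i => ν i + c) c : Fin (m+1) → ℕ) i.castSucc)) f *
        alt (m+1) (stair (m+1) μ) (fun i => q ^ ((Fin.snoc (fun i => ν i + c) c : Fin (m+1) → ℕ) i))) =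
    (q ^ ((∑ i, μ i) + (m+2).choose 2 + k + d)) ^ c *
      (q ^ (∑ i, ν i) * (MvPolynomial.eval (fun i => q ^ ν i) f *
        alt (m+1) (stair (m+1) μ) (Fin.snoc (fun i => q ^ ν i) 1))) := by
  have h1 : ∑ i : Fin (m+1), ((Fin.snoc (fun i => ν i + c) c : Fin (m+1) → ℕ) i) = (∑ i, ν i) + (m * c + c) := by
    rw [Fin.sum_univ_castSucc]
    simp only [Fin.snoc_castSucc, Fin.snoc_last, Finset.sum_add_distrib, Finset.sum_const,
      Finset.card_univ, Fintype.card_fin, smul_eq_mul]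
    ring
  have h2 : ((Fin.snoc (fun i => ν i + c) c : Fin (m+1) → ℕ) (Fin.last m)) = c := by
    rw [Fin.snoc_last]
  have h4 : (fun i : Fin (m+1) => q ^ ((Fin.snoc (fun i => ν i + c) c : Fin (m+1) → ℕ) i))
      = fun i => q ^ c * (Fin.snoc (fun i => q ^ ν i) 1 : Fin (m+1) → ℝ) i := by
    funext i
    induction i using Fin.lastCases with
    | last => simp [Fin.snoc_last]
    | cast i' =>
      rw [Fin.snoc_castSucc, Fin.snoc_castSucc, pow_add, mul_comm]
  have h5 : (fun i : Fin m => q ^ ((Fin.snoc (fun i => ν i + c) c : Fin (m+1) → ℕ) i.castSucc))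
      = fun i => q ^ c * q ^ ν i := by
    funext i
    rw [Fin.snoc_castSucc, pow_add, mul_comm]
  rw [h1, h2, h4, h5, alt_smul, hf (q^c) (fun i => q ^ ν i)]
  have hNS : (∑ i, μ i) + (m+2).choose 2 + k + d
      = (m + 1) + (∑ j, stair (m+1) μ j) + k + d := by
    have := sum_stair m μ; omega
  rw [hNS]
  ring

noncomputable def Hfun (q : ℝ) (m : ℕ) (lam : Fin m → ℕ) (f : MvPolynomial (Fin m) ℝ)
    (ν : {ν : Fin m → ℕ // Antitone ν}) : ℝ :=
  q ^ (∑ i, ν.1 i) * (MvPolynomial.eval (fun i => q ^ ν.1 i) f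
    * alt m lam (fun i => q ^ ν.1 i))

noncomputable def Gfun (q : ℝ) (m : ℕ) (μ : Fin (m+1) → ℕ) (f : MvPolynomial (Fin m) ℝ)
    (ν : {ν : Fin m → ℕ // Antitone ν}) : ℝ :=
  q ^ (∑ i, ν.1 i) * (MvPolynomial.eval (fun i => q ^ ν.1 i) f
    * alt (m+1) (stair (m+1) μ) (Fin.snoc (fun i => q ^ ν.1 i) 1))

lemma G_eq_sum (q : ℝ) (m : ℕ) (μ : Fin (m+1) → ℕ) (f : MvPolynomial (Fin m) ℝ)
    (ν : {ν : Fin m → ℕ // Antitone ν}) :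
    Gfun q m μ f ν = ∑ j : Fin (m+1),
      (-1:ℝ) ^ (m - (j:ℕ)) * Hfun q m (stair m (muhat (m+1) μ j)) f ν := by
  unfold Gfun Hfun
  rw [alt_snoc_one m μ (fun i => q ^ ν.1 i), Finset.mul_sum, Finset.mul_sum]
  refine Finset.sum_congr rfl fun j _ => ?_
  ring

lemma summable_H (q : ℝ) (hq0 : 0 < q) (hq1 : q < 1) (m : ℕ) (lam : Fin m → ℕ)
    (f : MvPolynomial (Fin m) ℝ) : Summable (Hfun q m lam f) := by
  have h := summable_abs_main q hq0 hq1 m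
    (g := fun y => MvPolynomial.eval y f * alt m lam y)
    ((MvPolynomial.continuous_eval f).mul (continuous_alt m lam))
  exact h.of_abs

theorem stmt5' (q : ℝ) (hq0 : 0 < q) (hq1 : q < 1) (m k d : ℕ)
    (μ : Fin (m+1) → ℕ)
    (f : MvPolynomial (Fin m) ℝ)
    (hf : ∀ (t : ℝ) (x : Fin m → ℝ),
      MvPolynomial.eval (fun i => t * x i) f = t ^ d * MvPolynomial.eval x f) :
    qint q (m+1) (fun x =>
        x (Fin.last m) ^ k
          * MvPolynomial.eval (fun i : Fin m => x i.castSucc) f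
          * alt (m+1) (stair (m+1) μ) x)
      = (1 - q) / (1 - q ^ ((∑ i, μ i) + (m+2).choose 2 + k + d))
          * ∑ ℓ : Fin (m+1), (-1 : ℝ) ^ (m - (ℓ : ℕ))
              * qint q m (fun x =>
                  MvPolynomial.eval x f * alt m (stair m (muhat (m+1) μ ℓ)) x) := by
  set N : ℕ := (∑ i, μ i) + (m+2).choose 2 + k + d with hN
  have hNpos : 0 < N := by
    have h2 : 0 < (m+2).choose 2 := Nat.choose_pos (by omega)
    omega
  have hqNlt : q ^ N < 1 := pow_lt_one₀ hq0.le hq1 (by omega)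
  have h1N : (0:ℝ) < 1 - q ^ N := by linarith
  have step1 : (∑' π : {π : Fin (m+1) → ℕ // Antitone π}, q ^ (∑ i, π.1 i) *
        ((q ^ π.1 (Fin.last m)) ^ k *
          MvPolynomial.eval (fun i : Fin m => q ^ π.1 i.castSucc) f *
          alt (m+1) (stair (m+1) μ) (fun i => q ^ π.1 i)))
      = (1 - q ^ N)⁻¹ * ∑' ν, Gfun q m μ f ν := by
    rw [← Equiv.tsum_eq (parEquiv m)]
    have e2 : ∀ p : ℕ × {ν : Fin m → ℕ // Antitone ν},
        (fun π : {π : Fin (m+1) → ℕ // Antitone π} => q ^ (∑ i, π.1 i) *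
          ((q ^ π.1 (Fin.last m)) ^ k *
            MvPolynomial.eval (fun i : Fin m => q ^ π.1 i.castSucc) f *
            alt (m+1) (stair (m+1) μ) (fun i => q ^ π.1 i))) (parEquiv m p)
          = (q ^ N) ^ p.1 * Gfun q m μ f p.2 :=
      fun p => key_point q m k d μ f hf p.1 p.2.1
    rw [tsum_congr e2]
    have hn1 : Summable fun c : ℕ => ‖(q^N)^c‖ := by
      have h := summable_geometric_of_lt_one (pow_nonneg hq0.le N) hqNlt
      simpa [Real.norm_eq_abs, abs_of_nonneg (pow_nonneg (pow_nonneg hq0.le N) _)] using h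
    have hn2 : Summable fun ν => ‖Gfun q m μ f ν‖ := by
      have h := summable_abs_main q hq0 hq1 m
        (g := fun y => MvPolynomial.eval y f * alt (m+1) (stair (m+1) μ) (Fin.snoc y 1))
        ((MvPolynomial.continuous_eval f).mul ((continuous_alt _ _).comp (continuous_snoc m)))
      simpa [Real.norm_eq_abs, Gfun, abs_mul] using h
    rw [← tsum_mul_tsum_of_summable_norm hn1 hn2,
      tsum_geometric_of_lt_one (pow_nonneg hq0.le N) hqNlt]
  have step2 : (∑' ν, Gfun q m μ f ν) = ∑ j : Fin (m+1), (-1:ℝ)^(m - (j:ℕ)) *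
      ∑' ν, Hfun q m (stair m (muhat (m+1) μ j)) f ν := by
    rw [tsum_congr (G_eq_sum q m μ f)]
    rw [Summable.tsum_finsetSum (fun j _ => ((summable_H q hq0 hq1 m _ f).mul_left _))]
    exact Finset.sum_congr rfl fun j _ => tsum_mul_left
  have hqint : ∀ lam : Fin m → ℕ, qint q m (fun x => MvPolynomial.eval x f * alt m lam x)
      = (1-q)^m * ∑' ν, Hfun q m lam f ν := fun lam => rfl
  have main1 : qint q (m+1) (fun x =>
        x (Fin.last m) ^ k
          * MvPolynomial.eval (fun i : Fin m => x i.castSucc) f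
          * alt (m+1) (stair (m+1) μ) x)
      = (1-q)^(m+1) * ((1 - q^N)⁻¹ * ∑' ν, Gfun q m μ f ν) := by
    rw [← step1]; rfl
  rw [main1, step2]
  simp only [hqint, Finset.mul_sum, div_eq_mul_inv]
  refine Finset.sum_congr rfl fun j _ => ?_
  ring

theorem stmt5 (q : ℝ) (hq0 : 0 < q) (hq1 : q < 1) (n k d : ℕ) (hn : 2 ≤ n)
    (μ : Fin n → ℕ) (hμ : Antitone μ)
    (f : MvPolynomial (Fin (n - 1)) ℝ)
    (hf : ∀ (t : ℝ) (x : Fin (n - 1) → ℝ),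
      MvPolynomial.eval (fun i => t * x i) f = t ^ d * MvPolynomial.eval x f) :
    qint q n (fun x =>
        x ⟨n - 1, by omega⟩ ^ k
          * MvPolynomial.eval (fun i : Fin (n - 1) => x (Fin.castLE (by omega) i)) f
          * alt n (stair n μ) x)
      = (1 - q) / (1 - q ^ ((∑ i, μ i) + (n + 1).choose 2 + k + d))
          * ∑ ℓ : Fin n, (-1 : ℝ) ^ (n - 1 - (ℓ : ℕ))
              * qint q (n - 1) (fun x =>
                  MvPolynomial.eval x f * alt (n - 1) (stair (n - 1) (muhat n μ ℓ)) x) := by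
  obtain ⟨m, rfl⟩ : ∃ m, n = m + 1 := ⟨n - 1, by omega⟩
  exact stmt5' q hq0 hq1 m k d μ f hf
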